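/- Let M = {1,…,m} be a set of goods, let v : 2^M → ℝ≥0 be an additive valuation with v({1}) ≥ v({2}) ≥ … ≥ v({m}), let n ≥ 2 be an integer number of agents, and let k be a nonnegative integer with k < m/n. Let K = {k(n−1)+1, k(n−1)+2, …, nk, nk+1}. Then μ^{n−1}(M \ K) ≥ μ^n(M), where μ^d(S) denotes the maximum over all partitions of S into d bundles of the minimum value of a bundle under v. -/

import Mathlib

open Finset

/-- The `d`-maximin share of valuation `v` over the set `S` of goods:
the maximum over partitions of `S` into `d` bundles of the minimum bundle value. -/
noncomputable def mms {G : Type*} (v : Finset G → ℝ) (d : ℕ) (S : Finset G) : ℝ :=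
  ⨆ P : G → Fin d, ⨅ j : Fin d, v (S.filter fun g => P g = j)

private lemma card_filter_val (m : ℕ) (p : ℕ → Prop) [DecidablePred p] :
    (Finset.univ.filter fun g : Fin m => p g.val).card
      = ((Finset.range m).filter p).card := by
  rw [Finset.card_filter, Finset.card_filter,
    Fin.sum_univ_eq_sum_range (fun i => if p i then 1 else 0)]

/-- For an ordered additive instance on goods `{1,…,m}` (indexed here by
`Fin m`, with weights non-increasing in the index), `n ≥ 2`, and `k < m/n`, removing the
goods `K = {k(n−1)+1, …, nk+1}` (0-indexed: those with index in `[k(n−1), nk]`) and one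
agent does not decrease the maximin share:
`μ^{n−1}(M \ K) ≥ μ^n(M)`. -/
theorem stmt12 (m : ℕ) (w : Fin m → ℝ) (hw : ∀ g, 0 ≤ w g)
    (hord : ∀ a b : Fin m, a ≤ b → w b ≤ w a)
    (n : ℕ) (hn : 2 ≤ n) (k : ℕ) (hk : k * n < m) :
    mms (fun S => ∑ g ∈ S, w g) n Finset.univ ≤
      mms (fun S => ∑ g ∈ S, w g) (n - 1)
        (Finset.univ \ (Finset.univ.filter fun g : Fin m =>
          k * (n - 1) ≤ (g : ℕ) ∧ (g : ℕ) ≤ n * k)) := by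
  have hk' : n * k < m := by rwa [Nat.mul_comm] at hk
  have hm : 0 < m := by omega
  have e1 : k * (n - 1) + k = n * k := by
    rcases n with _ | n
    · omega
    · simp only [Nat.add_sub_cancel]
      rw [Nat.mul_comm]; ring
  have hFm : Nonempty (Fin m) := ⟨⟨0, hm⟩⟩
  have hFn : Nonempty (Fin n) := ⟨⟨0, by omega⟩⟩
  have hFn1 : Nonempty (Fin (n - 1)) := ⟨⟨0, by omega⟩⟩
  set K : Finset (Fin m) := Finset.univ.filter fun g : Fin m =>
      k * (n - 1) ≤ (g : ℕ) ∧ (g : ℕ) ≤ n * k with hKdef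
  set T : Finset (Fin m) := Finset.univ.filter fun g : Fin m =>
      (g : ℕ) < k * (n - 1) with hTdef
  have hKcard : K.card = k + 1 := by
    have h0 := card_filter_val m (fun x => k * (n - 1) ≤ x ∧ x ≤ n * k)
    rw [hKdef, h0]
    have h2 : (Finset.range m).filter (fun x => k * (n - 1) ≤ x ∧ x ≤ n * k)
        = Finset.Icc (k * (n - 1)) (n * k) := by
      ext x
      simp only [Finset.mem_filter, Finset.mem_range, Finset.mem_Icc]
      omega
    rw [h2, Nat.card_Icc]
    omega
  have hTcard : T.card = k * (n - 1) := by
    have h0 := card_filter_val m (fun x => x < k * (n - 1))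
    rw [hTdef, h0]
    have h2 : (Finset.range m).filter (fun x => x < k * (n - 1))
        = Finset.range (k * (n - 1)) := by
      ext x
      simp only [Finset.mem_filter, Finset.mem_range]
      omega
    rw [h2, Finset.card_range]
  simp only [mms]
  apply ciSup_le
  intro P
  -- construct a good (n-1)-partition of univ \ K
  obtain ⟨Q, hQ⟩ : ∃ Q : Fin m → Fin (n - 1), ∀ i : Fin (n - 1),
      (⨅ j : Fin n, ∑ g ∈ Finset.univ.filter (fun g => P g = j), w g) ≤
        ∑ g ∈ (Finset.univ \ K).filter (fun g => Q g = i), w g := by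
    -- pigeonhole: find bundle b rich in T ∪ K
    have hfib : ∀ (S : Finset (Fin m)),
        ∑ b : Fin n, (S.filter fun g => P g = b).card = S.card :=
      fun S => (Finset.card_eq_sum_card_fiberwise (fun x _ => Finset.mem_univ (P x))).symm
    obtain ⟨b, hb⟩ : ∃ b : Fin n, k + 1 ≤
        (T.filter fun g => P g = b).card + (K.filter fun g => P g = b).card := by
      by_contra hcon
      push_neg at hcon
      have hsum : ∑ b : Fin n,
          ((T.filter fun g => P g = b).card + (K.filter fun g => P g = b).card)
            = k * (n - 1) + (k + 1) := by
        rw [Finset.sum_add_distrib, hfib T, hfib K, hTcard, hKcard]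
      have hle : ∑ b : Fin n,
          ((T.filter fun g => P g = b).card + (K.filter fun g => P g = b).card)
            ≤ ∑ _b : Fin n, k :=
        Finset.sum_le_sum fun b _ => by have := hcon b; omega
      rw [hsum] at hle
      simp only [Finset.sum_const, Finset.card_univ, Fintype.card_fin, smul_eq_mul] at hle
      omega
    set A : Finset (Fin m) := K.filter fun g => ¬ P g = b with hAdef
    set C : Finset (Fin m) := T.filter fun g => P g = b with hCdef
    have hAC : A.card ≤ C.card := by
      have h2 : (K.filter fun g => P g = b).card + A.card = K.card := by
        rw [hAdef]
        exact Finset.card_filter_add_card_filter_not (p := fun g => P g = b)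
      omega
    set ψ : Fin m → Fin m := fun g =>
      if h : g ∈ A then (C.orderEmbOfFin rfl) (Fin.castLE hAC ((A.orderIsoOfFin rfl).symm ⟨g, h⟩))
      else g with hψdef
    have hψC : ∀ g ∈ A, ψ g ∈ C := by
      intro g hg
      simp only [hψdef, dif_pos hg]
      exact Finset.orderEmbOfFin_mem _ _ _
    have hψinj : Set.InjOn ψ ↑A := by
      intro g1 h1 g2 h2 heq
      rw [Finset.mem_coe] at h1 h2
      simp only [hψdef, dif_pos h1, dif_pos h2] at heq
      have h3 := (C.orderEmbOfFin rfl).injective heq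
      have h4 := Fin.castLE_injective hAC h3
      have h5 := (A.orderIsoOfFin rfl).symm.injective h4
      exact congrArg Subtype.val h5
    -- membership facts
    have hAK : ∀ g ∈ A, k * (n - 1) ≤ (g : ℕ) ∧ ¬ P g = b := by
      intro g hg
      rw [hAdef, Finset.mem_filter, hKdef, Finset.mem_filter] at hg
      simp only [Finset.mem_univ, true_and] at hg
      exact ⟨hg.1.1, hg.2⟩
    have hCT : ∀ g ∈ C, (g : ℕ) < k * (n - 1) ∧ P g = b := by
      intro g hg
      rw [hCdef, Finset.mem_filter, hTdef, Finset.mem_filter] at hg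
      simp only [Finset.mem_univ, true_and] at hg
      exact ⟨hg.1, hg.2⟩
    have hψw : ∀ g ∈ A, w g ≤ w (ψ g) := by
      intro g hg
      have h1 := (hCT _ (hψC g hg)).1
      have h2 := (hAK g hg).1
      exact hord (ψ g) g (Fin.le_def.mpr (by omega))
    set φ : Fin m → Fin m := Function.invFunOn ψ ↑A with hφdef
    have hφ : ∀ g ∈ A, φ (ψ g) = g := fun g hg =>
      hψinj.leftInvOn_invFunOn (Finset.mem_coe.mpr hg)
    set d : Fin n → Fin (n - 1) := fun j =>
      ⟨if (j : ℕ) < (b : ℕ) then (j : ℕ) else (j : ℕ) - 1, by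
        have := j.isLt; have := b.isLt; split <;> omega⟩ with hddef
    set up : Fin (n - 1) → Fin n := fun i =>
      ⟨if (i : ℕ) < (b : ℕ) then (i : ℕ) else (i : ℕ) + 1, by
        have := i.isLt; have := b.isLt; split <;> omega⟩ with hupdef
    have hup_ne : ∀ i, up i ≠ b := by
      intro i hEq
      have h2 := congrArg Fin.val hEq
      simp only [hupdef] at h2
      split at h2 <;> omega
    have hdu : ∀ i, d (up i) = i := by
      intro i
      apply Fin.ext
      simp only [hddef, hupdef]
      have := i.isLt
      split_ifs <;> omega
    set Q : Fin m → Fin (n - 1) := fun g =>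
      if g ∈ A.image ψ then d (P (φ g)) else d (P g) with hQdef
    refine ⟨Q, fun i => ?_⟩
    set j : Fin n := up i with hjdef
    have hjb : j ≠ b := hup_ne i
    have hdj : d j = i := hdu i
    have key1 : ∀ g : Fin m, P g = j → g ∈ K → g ∈ A := by
      intro g hg hgK
      rw [hAdef, Finset.mem_filter]
      exact ⟨hgK, by rw [hg]; exact hjb⟩
    set F1 : Finset (Fin m) := Finset.univ.filter fun g => P g = j ∧ g ∈ K with hF1def
    set F2 : Finset (Fin m) := Finset.univ.filter fun g => P g = j ∧ g ∉ K with hF2def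
    have hF1A : ∀ g ∈ F1, g ∈ A := by
      intro g hg
      rw [hF1def, Finset.mem_filter] at hg
      exact key1 g hg.2.1 hg.2.2
    have hsplit : ∑ g ∈ Finset.univ.filter (fun g => P g = j), w g
        = (∑ g ∈ F1, w g) + (∑ g ∈ F2, w g) := by
      rw [← Finset.sum_filter_add_sum_filter_not
        (Finset.univ.filter fun g => P g = j) (fun g => g ∈ K) w]
      rw [Finset.filter_filter, Finset.filter_filter]
    have hF1 : ∑ g ∈ F1, w g ≤ ∑ g ∈ F1.image ψ, w g := by
      rw [Finset.sum_image (fun x hx y hy hxy =>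
        hψinj (Finset.mem_coe.mpr (hF1A x hx)) (Finset.mem_coe.mpr (hF1A y hy)) hxy)]
      exact Finset.sum_le_sum fun g hg => hψw g (hF1A g hg)
    have hdisj : Disjoint (F1.image ψ) F2 := by
      rw [Finset.disjoint_left]
      intro x hx hx2
      obtain ⟨g, hg, rfl⟩ := Finset.mem_image.mp hx
      have hPb : P (ψ g) = b := (hCT _ (hψC g (hF1A g hg))).2
      rw [hF2def, Finset.mem_filter] at hx2
      exact hjb (hx2.2.1 ▸ hPb)
    have hsub : F1.image ψ ∪ F2 ⊆ (Finset.univ \ K).filter fun g => Q g = i := by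
      intro x hx
      rw [Finset.mem_union] at hx
      rcases hx with hx | hx
      · obtain ⟨g, hg, rfl⟩ := Finset.mem_image.mp hx
        have hgA : g ∈ A := hF1A g hg
        have hlt : ((ψ g : Fin m) : ℕ) < k * (n - 1) := (hCT _ (hψC g hgA)).1
        have hnotK : ψ g ∉ K := by
          rw [hKdef, Finset.mem_filter]
          push_neg
          intro _ h2
          omega
        refine Finset.mem_filter.mpr ⟨Finset.mem_sdiff.mpr ⟨Finset.mem_univ _, hnotK⟩, ?_⟩
        have himg : ψ g ∈ A.image ψ := Finset.mem_image_of_mem ψ hgA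
        simp only [hQdef]
        rw [if_pos himg, hφ g hgA]
        have hPg : P g = j := by
          rw [hF1def, Finset.mem_filter] at hg
          exact hg.2.1
        rw [hPg, hdj]
      · rw [hF2def, Finset.mem_filter] at hx
        have hnotK : x ∉ K := hx.2.2
        have hPx : P x = j := hx.2.1
        have hnimg : x ∉ A.image ψ := by
          intro hmem
          obtain ⟨g, hg, rfl⟩ := Finset.mem_image.mp hmem
          have hPb : P (ψ g) = b := (hCT _ (hψC g hg)).2
          exact hjb (hPx ▸ hPb)
        refine Finset.mem_filter.mpr ⟨Finset.mem_sdiff.mpr ⟨Finset.mem_univ _, hnotK⟩, ?_⟩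
        simp only [hQdef]
        rw [if_neg hnimg, hPx, hdj]
    calc (⨅ j' : Fin n, ∑ g ∈ Finset.univ.filter (fun g => P g = j'), w g)
        ≤ ∑ g ∈ Finset.univ.filter (fun g => P g = j), w g :=
          ciInf_le ((Set.finite_range _).bddBelow) j
      _ = (∑ g ∈ F1, w g) + (∑ g ∈ F2, w g) := hsplit
      _ ≤ (∑ g ∈ F1.image ψ, w g) + (∑ g ∈ F2, w g) := add_le_add_left hF1 _
      _ = ∑ g ∈ F1.image ψ ∪ F2, w g := (Finset.sum_union hdisj).symm
      _ ≤ ∑ g ∈ (Finset.univ \ K).filter (fun g => Q g = i), w g :=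
          Finset.sum_le_sum_of_subset_of_nonneg hsub (fun g _ _ => hw g)
  have hbdd : BddAbove (Set.range fun Q' : Fin m → Fin (n - 1) =>
      ⨅ i : Fin (n - 1), ∑ g ∈ (Finset.univ \ K).filter (fun g => Q' g = i), w g) := by
    refine ⟨∑ g : Fin m, w g, ?_⟩
    rintro x ⟨Q', rfl⟩
    refine le_trans (ciInf_le ((Set.finite_range _).bddBelow) (Classical.arbitrary _)) ?_
    exact Finset.sum_le_sum_of_subset_of_nonneg (Finset.subset_univ _) (fun g _ _ => hw g)
  exact le_trans (le_ciInf hQ) (le_ciSup hbdd Q)
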